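/- Let n ∈ ℤ₊ ∪ {∞}. If u ∈ C_φ^{(n)} and v ∈ C_φ^{(n+1)}, then the function u·(X v) belongs to C_φ^{(n)}. Equivalently, with V_φ^{(n)} := { u·X : u ∈ C_φ^{(n)} }, one has V_φ^{(n)} C_φ^{(n+1)} ⊂ C_φ^{(n)}. -/

import Mathlib

open Real Set Filter Topology

/-- The open interval `(α, β)` of real numbers, where `α β` are extended reals. -/
def EI (α β : EReal) : Set ℝ := {x : ℝ | α < (x : EReal) ∧ (x : EReal) < β}

/-- `u : ℝ → ℝ` (thought of as a function on `(α, β)`) extends to a continuous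
function on `[α, β] ⊆ EReal`. -/
def ContExt (α β : EReal) (u : ℝ → ℝ) : Prop :=
  ∃ g : EReal → ℝ, ContinuousOn g (Set.Icc α β) ∧
    ∀ x : ℝ, x ∈ EI α β → g (x : EReal) = u x

/-- The operator `X u := φ · u′`. -/
noncomputable def Xop (φ u : ℝ → ℝ) : ℝ → ℝ := fun x => φ x * deriv u x

/-- The iterates `X^k u`. -/
noncomputable def Xiter (φ : ℝ → ℝ) : ℕ → (ℝ → ℝ) → (ℝ → ℝ)
  | 0, u => u
  | n + 1, u => Xop φ (Xiter φ n u)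

/-- The space `C_φ^{(n)}`: inductively, `C_φ^{(0)}` consists of the functions having a
continuous extension to `[α, β]`, and `u ∈ C_φ^{(n+1)}` iff `u ∈ C_φ^{(n)}`, `X^n u` is
differentiable on `(α, β)`, and `X^{n+1} u` extends to a continuous function on `[α, β]`. -/
def CN (α β : EReal) (φ : ℝ → ℝ) : ℕ → Set (ℝ → ℝ)
  | 0 => {u | ContExt α β u}
  | n + 1 => {u | u ∈ CN α β φ n ∧
      (∀ x ∈ EI α β, DifferentiableAt ℝ (Xiter φ n u) x) ∧
      ContExt α β (Xiter φ (n + 1) u)}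

/-- The space `C_φ^{(∞)} := ⋂ₙ C_φ^{(n)}`. -/
def Cinf (α β : EReal) (φ : ℝ → ℝ) : Set (ℝ → ℝ) := ⋂ n : ℕ, CN α β φ n

/-- The spaces `C_φ^{(n)}` for `n ∈ ℤ₊ ∪ {∞}`. -/
def CNE (α β : EReal) (φ : ℝ → ℝ) (n : ℕ∞) : Set (ℝ → ℝ) :=
  WithTop.recTopCoe (Cinf α β φ) (fun k => CN α β φ k) n

/- ### Auxiliary lemmas -/

lemma isOpen_EI (α β : EReal) : IsOpen (EI α β) := by
  have : EI α β = (fun x : ℝ => (x : EReal)) ⁻¹' (Set.Ioo α β) := rfl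
  rw [this]
  exact isOpen_Ioo.preimage continuous_coe_real_ereal

lemma ei_mem_nhds {α β : EReal} {x : ℝ} (hx : x ∈ EI α β) : EI α β ∈ 𝓝 x :=
  (isOpen_EI α β).mem_nhds hx

lemma eventuallyEq_of_ei {α β : EReal} {f g : ℝ → ℝ} {x : ℝ} (hx : x ∈ EI α β)
    (h : ∀ y ∈ EI α β, f y = g y) : f =ᶠ[𝓝 x] g :=
  Filter.eventually_of_mem (ei_mem_nhds hx) h

lemma contExt_congr {α β : EReal} {f g : ℝ → ℝ} (hfg : ∀ x ∈ EI α β, f x = g x)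
    (h : ContExt α β f) : ContExt α β g := by
  obtain ⟨G, hG, hGf⟩ := h
  exact ⟨G, hG, fun x hx => (hGf x hx).trans (hfg x hx)⟩

lemma contExt_add {α β : EReal} {f g : ℝ → ℝ} (hf : ContExt α β f) (hg : ContExt α β g) :
    ContExt α β (fun x => f x + g x) := by
  obtain ⟨F, hF, hFf⟩ := hf
  obtain ⟨G, hG, hGg⟩ := hg
  refine ⟨fun y => F y + G y, hF.add hG, fun x hx => ?_⟩
  show F x + G x = f x + g x
  rw [hFf x hx, hGg x hx]

lemma contExt_mul {α β : EReal} {f g : ℝ → ℝ} (hf : ContExt α β f) (hg : ContExt α β g) :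
    ContExt α β (fun x => f x * g x) := by
  obtain ⟨F, hF, hFf⟩ := hf
  obtain ⟨G, hG, hGg⟩ := hg
  refine ⟨fun y => F y * G y, hF.mul hG, fun x hx => ?_⟩
  show F x * G x = f x * g x
  rw [hFf x hx, hGg x hx]

lemma xiter_shift {φ : ℝ → ℝ} (k : ℕ) (v : ℝ → ℝ) :
    Xiter φ k (Xop φ v) = Xiter φ (k + 1) v := by
  induction k with
  | zero => rfl
  | succ k ih =>
    show Xop φ (Xiter φ k (Xop φ v)) = Xop φ (Xiter φ (k + 1) v)
    rw [ih]

lemma cn_succ_iff {α β : EReal} {φ : ℝ → ℝ} (n : ℕ) (f : ℝ → ℝ) :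
    f ∈ CN α β φ (n + 1) ↔ ContExt α β f ∧ (∀ x ∈ EI α β, DifferentiableAt ℝ f x) ∧
      Xop φ f ∈ CN α β φ n := by
  induction n generalizing f with
  | zero =>
    show (f ∈ CN α β φ 0 ∧ _ ∧ _) ↔ _
    simp only [CN, Set.mem_setOf_eq, Xiter]
  | succ n ih =>
    show (f ∈ CN α β φ (n + 1) ∧ _ ∧ _) ↔ _
    rw [ih f]
    have h1 : Xiter φ (n + 1) f = Xiter φ n (Xop φ f) := (xiter_shift n f).symm
    have h2 : Xiter φ (n + 2) f = Xiter φ (n + 1) (Xop φ f) := (xiter_shift (n + 1) f).symm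
    rw [h1, h2]
    show _ ↔ _ ∧ _ ∧ (Xop φ f ∈ CN α β φ n ∧ _ ∧ _)
    tauto

lemma cn_of_succ {α β : EReal} {φ : ℝ → ℝ} {n : ℕ} {f : ℝ → ℝ}
    (h : f ∈ CN α β φ (n + 1)) : f ∈ CN α β φ n := h.1

lemma cn_congr {α β : EReal} {φ : ℝ → ℝ} : ∀ (n : ℕ) {f g : ℝ → ℝ},
    (∀ x ∈ EI α β, f x = g x) → f ∈ CN α β φ n → g ∈ CN α β φ n := by
  intro n
  induction n with
  | zero => exact fun hfg hf => contExt_congr hfg hf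
  | succ n ih =>
    intro f g hfg hf
    rw [cn_succ_iff] at hf ⊢
    obtain ⟨hce, hdiff, hX⟩ := hf
    refine ⟨contExt_congr hfg hce, ?_, ?_⟩
    · intro x hx
      exact ((eventuallyEq_of_ei hx hfg).differentiableAt_iff).1 (hdiff x hx)
    · refine ih (f := Xop φ f) ?_ hX
      intro x hx
      show φ x * deriv f x = φ x * deriv g x
      rw [(eventuallyEq_of_ei hx hfg).deriv_eq]

lemma cn_add {α β : EReal} {φ : ℝ → ℝ} : ∀ (n : ℕ) {f g : ℝ → ℝ},
    f ∈ CN α β φ n → g ∈ CN α β φ n → (fun x => f x + g x) ∈ CN α β φ n := by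
  intro n
  induction n with
  | zero => exact fun hf hg => contExt_add hf hg
  | succ n ih =>
    intro f g hf hg
    rw [cn_succ_iff] at hf hg ⊢
    obtain ⟨hfc, hfd, hfX⟩ := hf
    obtain ⟨hgc, hgd, hgX⟩ := hg
    refine ⟨contExt_add hfc hgc, fun x hx => (hfd x hx).add (hgd x hx), ?_⟩
    refine cn_congr n (f := fun x => Xop φ f x + Xop φ g x) ?_ (ih hfX hgX)
    intro x hx
    show φ x * deriv f x + φ x * deriv g x = φ x * deriv (fun y => f y + g y) x
    rw [deriv_fun_add (hfd x hx) (hgd x hx)]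
    ring

lemma cn_mul {α β : EReal} {φ : ℝ → ℝ} : ∀ (n : ℕ) {f g : ℝ → ℝ},
    f ∈ CN α β φ n → g ∈ CN α β φ n → (fun x => f x * g x) ∈ CN α β φ n := by
  intro n
  induction n with
  | zero => exact fun hf hg => contExt_mul hf hg
  | succ n ih =>
    intro f g hf hg
    have hfn : f ∈ CN α β φ n := cn_of_succ hf
    have hgn : g ∈ CN α β φ n := cn_of_succ hg
    rw [cn_succ_iff] at hf hg ⊢
    obtain ⟨hfc, hfd, hfX⟩ := hf
    obtain ⟨hgc, hgd, hgX⟩ := hg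
    refine ⟨contExt_mul hfc hgc, fun x hx => (hfd x hx).mul (hgd x hx), ?_⟩
    refine cn_congr n (f := fun x => Xop φ f x * g x + f x * Xop φ g x) ?_
      (cn_add n (ih hfX hgn) (ih hfn hgX))
    intro x hx
    show φ x * deriv f x * g x + f x * (φ x * deriv g x) = φ x * deriv (fun y => f y * g y) x
    rw [deriv_fun_mul (hfd x hx) (hgd x hx)]
    ring

theorem Vphi_acts_on_CN (α β : EReal) (hαβ : α < β) (φ : ℝ → ℝ)
    (hφc : ContinuousOn φ (EI α β)) (hφpos : ∀ x ∈ EI α β, 0 < φ x)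
    (n : ℕ∞) (u v : ℝ → ℝ) (hu : u ∈ CNE α β φ n) (hv : v ∈ CNE α β φ (n + 1)) :
    (fun x => u x * Xop φ v x) ∈ CNE α β φ n := by
  have key : ∀ (m : ℕ) (u v : ℝ → ℝ), u ∈ CN α β φ m → v ∈ CN α β φ (m + 1) →
      (fun x => u x * Xop φ v x) ∈ CN α β φ m := by
    intro m u v hu hv
    exact cn_mul m hu ((cn_succ_iff m v).1 hv).2.2
  induction n using WithTop.recTopCoe with
  | top =>
    have hv' : v ∈ Cinf α β φ := by
      have : (⊤ + 1 : ℕ∞) = ⊤ := by simp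
      change v ∈ CNE α β φ ⊤ at hv
      exact hv
    refine Set.mem_iInter.2 fun m => key m u v (Set.mem_iInter.1 hu m) ?_
    exact Set.mem_iInter.1 hv' (m + 1)
  | coe k =>
    have hv' : v ∈ CN α β φ (k + 1) := by
      norm_cast at hv
    exact key k u v hu hv'
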